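/- Let W_R, W_M be n×n stochastic weight matrices with zero diagonal. If for every nonempty proper subset S ⊂ V one has Σ_{i∉S}Σ_{j∈S} w^R_{ij} = Σ_{i∉S}Σ_{j∈S} w^M_{ji}, then both W_R and W_M are doubly stochastic and w^R_{ij} + w^R_{ji} = w^M_{ij} + w^M_{ji} for every pair i,j ∈ V. -/

import Mathlib

/-- **Generalized Isothermal Theorem (necessity direction).**
Let `wR, wM` be stochastic weight matrices with zero diagonal on a vertex set with `n ≥ 3`.
If for every nonempty proper subset `S ⊂ V` one has
`Σ_{i∉S} Σ_{j∈S} wR i j = Σ_{i∉S} Σ_{j∈S} wM j i`,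
then both matrices are doubly stochastic and
`wR i j + wR j i = wM i j + wM j i` for every pair `i, j`. -/
theorem generalized_isothermal_necessary
    {V : Type*} [Fintype V] [DecidableEq V] (hcard : 3 ≤ Fintype.card V)
    (wR wM : V → V → ℝ)
    (hRnn : ∀ i j, 0 ≤ wR i j) (hMnn : ∀ i j, 0 ≤ wM i j)
    (hRdiag : ∀ i, wR i i = 0) (hMdiag : ∀ i, wM i i = 0)
    (hRrow : ∀ i, ∑ j, wR i j = 1) (hMrow : ∀ i, ∑ j, wM i j = 1)
    (hbal : ∀ S : Finset V, S.Nonempty → S ≠ Finset.univ →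
      ∑ i ∈ Sᶜ, ∑ j ∈ S, wR i j = ∑ i ∈ Sᶜ, ∑ j ∈ S, wM j i) :
    (∀ j, ∑ i, wR i j = 1) ∧ (∀ j, ∑ i, wM i j = 1) ∧
    (∀ i j, wR i j + wR j i = wM i j + wM j i) := by
  have hcolR : ∀ j, ∑ i, wR i j = 1 := by
    intro j
    have hne : ({j} : Finset V) ≠ Finset.univ := by
      intro h
      have := congrArg Finset.card h
      simp [Finset.card_univ] at this
      omega
    have h := hbal {j} (Finset.singleton_nonempty j) hne
    simp only [Finset.sum_singleton, Finset.compl_singleton] at h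
    have e1 : ∑ x ∈ Finset.univ.erase j, wR x j = ∑ x, wR x j :=
      Finset.sum_erase _ (hRdiag j)
    have e2 : ∑ x ∈ Finset.univ.erase j, wM j x = ∑ x, wM j x :=
      Finset.sum_erase _ (hMdiag j)
    rw [e1, e2] at h
    rw [h, hMrow j]
  have hcolM : ∀ j, ∑ i, wM i j = 1 := by
    intro j
    have hne : ({j} : Finset V)ᶜ ≠ Finset.univ := by
      intro h
      have : j ∈ ({j} : Finset V)ᶜ := h ▸ Finset.mem_univ j
      simp at this
    have hnonempty : (({j} : Finset V)ᶜ).Nonempty := by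
      rw [← Finset.card_pos, Finset.card_compl]
      simp
      omega
    have h := hbal _ hnonempty hne
    rw [compl_compl] at h
    simp only [Finset.sum_singleton, Finset.compl_singleton] at h
    have e0 : ∑ x ∈ Finset.univ.erase j, wR j x = ∑ x, wR j x :=
      Finset.sum_erase _ (hRdiag j)
    have e1 : ∑ x ∈ Finset.univ.erase j, wM x j = ∑ x, wM x j :=
      Finset.sum_erase _ (hMdiag j)
    simp only [e0, e1] at h
    rw [← h, hRrow j]
  refine ⟨hcolR, hcolM, ?_⟩
  intro i j
  by_cases hij : i = j
  · subst hij; rw [hRdiag, hMdiag]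
  have hne : (({i, j} : Finset V)ᶜ) ≠ Finset.univ := by
    intro h
    have : i ∈ ({i, j} : Finset V)ᶜ := h ▸ Finset.mem_univ i
    simp at this
  have hnonempty : (({i, j} : Finset V)ᶜ).Nonempty := by
    rw [← Finset.card_pos, Finset.card_compl, Finset.card_pair hij]
    omega
  have h := hbal _ hnonempty hne
  rw [compl_compl, Finset.sum_pair hij, Finset.sum_pair hij] at h
  have key : ∀ f : V → ℝ, ∑ l ∈ ({i, j} : Finset V)ᶜ, f l = ∑ l, f l - f i - f j := by
    intro f
    have h2 := Finset.sum_compl_add_sum ({i, j} : Finset V) f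
    rw [Finset.sum_pair hij] at h2
    linarith
  rw [key (wR i ·), key (wR j ·), key (wM · i), key (wM · j)] at h
  have h1 := hRrow i; have h2 := hRrow j
  have h3 := hcolM i; have h4 := hcolM j
  have d1 := hRdiag i; have d2 := hRdiag j
  have d3 := hMdiag i; have d4 := hMdiag j
  linarith
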